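/- For every j, the L² norm of the Littlewood-Paley piece U_{q_j} of the field U is comparable to λ_{q_j}^{2α−5/2}: there are absolute constants 0 < c ≤ C (independent of j) with c·λ_{q_j}^{2α−5/2} ≤ |U_{q_j}|_{L²(T³)} ≤ C·λ_{q_j}^{2α−5/2}. -/

import Mathlib

open MeasureTheory Filter
open scoped ENNReal Topology Pointwise BigOperators

noncomputable section

/-- Points of the torus `T³ = (ℝ/2πℤ)³`, represented by `ℝ³`. -/
abbrev Pt : Type := Fin 3 → ℝ

/-- Values of vector fields. -/
abbrev Vec : Type := Fin 3 → ℝ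

/-- Vector fields on the torus (2π-periodic functions on `ℝ³`). -/
abbrev VF : Type := Pt → Vec

/-- Frequencies. -/
abbrev Frq : Type := Fin 3 → ℤ

/-- A fundamental domain `[0,2π)³` for the torus. -/
def torusCube : Set Pt := Set.univ.pi fun _ => Set.Ico 0 (2 * Real.pi)

/-- The measure on the torus: Lebesgue measure restricted to the fundamental domain. -/
def μT : Measure Pt := volume.restrict torusCube

/-- `ξ · x` for a frequency `ξ ∈ ℤ³` and a point `x`. -/
def fdot (ξ : Frq) (x : Pt) : ℝ := ∑ i, (ξ i : ℝ) * x i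

/-- The character `e^{i ξ·x}`. -/
def fchar (ξ : Frq) (x : Pt) : ℂ := Complex.exp (Complex.I * (fdot ξ x : ℝ))

/-- Fourier coefficient `û(ξ) = (2π)⁻³ ∫_{T³} u(x) e^{-iξ·x} dx` of a scalar function. -/
def fcoefC (f : Pt → ℂ) (ξ : Frq) : ℂ :=
  (((2 * Real.pi) ^ (3 : ℕ))⁻¹ : ℝ) • ∫ x in torusCube, f x * Complex.exp (-(Complex.I * (fdot ξ x : ℝ)))

/-- Fourier coefficients of a vector field, componentwise. -/
def fcoef (u : VF) (ξ : Frq) (i : Fin 3) : ℂ := fcoefC (fun x => (u x i : ℂ)) ξ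

/-- Euclidean norm `|ξ|` of a frequency. -/
def freqNorm (ξ : Frq) : ℝ := Real.sqrt (∑ i, ((ξ i : ℝ)) ^ 2)

/-- Dyadic wavenumbers `λ_q = 2^q`. -/
def lam (q : ℕ) : ℝ := 2 ^ q

/-- The `q`-th dyadic shell: `λ_{q-1} < |ξ| < λ_{q+1}` for `q ≥ 1`, and `|ξ| < 2` for `q = 0`. -/
def inShell (q : ℕ) (ξ : Frq) : Prop :=
  if q = 0 then freqNorm ξ < 2 else lam (q - 1) < freqNorm ξ ∧ freqNorm ξ < lam (q + 1)

/-- The Littlewood–Paley piece `u_q`: projection onto Fourier modes in the `q`-th shell. -/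
def LP (q : ℕ) (u : VF) : VF := fun x i =>
  (∑' ξ : Frq, Set.indicator {ξ : Frq | inShell q ξ} (fun ξ => fcoef u ξ i * fchar ξ x) ξ).re

/-- `u_{≤ q} = ∑_{p=0}^q u_p`. -/
def LPle (q : ℕ) (u : VF) : VF := fun x i => ∑ p ∈ Finset.range (q + 1), LP p u x i

/-- `u_{≥ q} = ∑_{p ≥ q} u_p = u - u_{≤ q-1}` (for `q ≥ 1`). -/
def LPge (q : ℕ) (u : VF) : VF := fun x i => u x i - LPle (q - 1) u x i

/-- The extended projection `ũ_q = u_{q-1} + u_q + u_{q+1}`. -/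
def LPt (q : ℕ) (u : VF) : VF := fun x i => LP (q - 1) u x i + LP q u x i + LP (q + 1) u x i

/-- The `L^r(T³)` norm `|u|_r` (real-valued). -/
def lpn (r : ℝ≥0∞) (u : VF) : ℝ := (eLpNorm u r μT).toReal

/-- The Besov norm `‖u‖_{B^s_{r,∞}} = sup_{q ≥ 0} λ_q^s |u_q|_r`, valued in `ℝ≥0∞`. -/
def besov (s : ℝ) (r : ℝ≥0∞) (u : VF) : ℝ≥0∞ :=
  ⨆ q : ℕ, ENNReal.ofReal (lam q ^ s) * eLpNorm (LP q u) r μT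

/-- The square of the `L²` norm of `|∇|^a u`, computed via Plancherel:
`| |∇|^a u |₂² = (2π)³ ∑_ξ |ξ|^{2a} |û(ξ)|²`, valued in `ℝ≥0∞`. -/
def sobSq (a : ℝ) (u : VF) : ℝ≥0∞ :=
  ENNReal.ofReal ((2 * Real.pi) ^ (3 : ℕ)) *
    ∑' ξ : Frq, ENNReal.ofReal (freqNorm ξ ^ (2 * a) * ∑ i, ‖fcoef u ξ i‖ ^ 2)

/-- `| |∇|^a u |_{L²}` (real-valued). -/
def sobn (a : ℝ) (u : VF) : ℝ := Real.sqrt (sobSq a u).toReal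

/-- Partial derivative `∂_i f`. -/
def pd (i : Fin 3) (f : Pt → ℝ) (x : Pt) : ℝ := fderiv ℝ f x (Pi.single i 1)

/-- The trilinear form `u ⊗ v : ∇w = ∫_{T³} v_i ∂_i w_j u_j dx`. -/
def tri (u v w : VF) : ℝ :=
  ∫ x in torusCube, ∑ i, ∑ j, v x i * pd i (fun y => w y j) x * u x j

/-- The lattice block `A_j` (at wavenumber `λ_m`). -/
def blockA (m : ℕ) : Set Frq :=
  {ξ | 9 / 10 * lam m ≤ (ξ 0 : ℝ) ∧ (ξ 0 : ℝ) ≤ 11 / 10 * lam m ∧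
       |(ξ 1 : ℝ)| ≤ lam m / 10 ∧ |(ξ 2 : ℝ)| ≤ lam m / 10}

/-- The lattice block `B_j` (at wavenumber `λ_{m-1}`). -/
def blockB (m : ℕ) : Set Frq :=
  {ξ | |(ξ 0 : ℝ)| ≤ lam (m - 1) / 10 ∧ |(ξ 1 : ℝ)| ≤ lam (m - 1) / 10 ∧
       9 / 10 * lam (m - 1) ≤ (ξ 2 : ℝ) ∧ (ξ 2 : ℝ) ≤ 11 / 10 * lam (m - 1)}

/-- `C_j = A_j + B_j`. -/
def blockC (m : ℕ) : Set Frq := blockA m + blockB m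

/-- `e_k(ξ) = p(ξ) e_k` where `p(ξ) = Id - |ξ|⁻² ξ⊗ξ` (`p(0) = Id`) is the Leray projection symbol. -/
def esymb (k : Fin 3) (ξ : Frq) : Vec :=
  if ξ = 0 then Pi.single k 1
  else fun i => (Pi.single k 1 : Vec) i - (ξ i : ℝ) * (ξ k : ℝ) / (∑ m, ((ξ m : ℝ)) ^ 2)

/-- The matrix of the Leray projection symbol `p(ξ)`. -/
def lerayMat (ξ : Frq) (i j : Fin 3) : ℝ :=
  if ξ = 0 then (if i = j then 1 else 0)
  else (if i = j then 1 else 0) - (ξ i : ℝ) * (ξ j : ℝ) / (∑ m, ((ξ m : ℝ)) ^ 2)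

/-- The Fourier coefficients `Û_{q_j}(ξ)` of the high piece of the `j`-th building block:
`λ_{q_j}^{2α-4} ( e₂(ξ) χ_{A_j ∪ A_j*} + i (e₂(ξ)-e₁(ξ)) χ_{C_j} - i (e₂(ξ)-e₁(ξ)) χ_{C_j*} )`. -/
def UhatH (α : ℝ) (qs : ℕ → ℕ) (j : ℕ) (ξ : Frq) (i : Fin 3) : ℂ :=
  (lam (qs j) ^ (2 * α - 4) : ℝ) *
    (Set.indicator (blockA (qs j) ∪ -blockA (qs j)) (fun ξ => ((esymb 1 ξ i : ℝ) : ℂ)) ξ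
      + Complex.I *
          Set.indicator (blockC (qs j)) (fun ξ => ((esymb 1 ξ i - esymb 0 ξ i : ℝ) : ℂ)) ξ
      - Complex.I *
          Set.indicator (-blockC (qs j)) (fun ξ => ((esymb 1 ξ i - esymb 0 ξ i : ℝ) : ℂ)) ξ)

/-- The Fourier coefficients `Û_{q_j - 1}(ξ) = λ_{q_j}^{2α-4} e₁(ξ) χ_{B_j ∪ B_j*}(ξ)`. -/
def UhatL (α : ℝ) (qs : ℕ → ℕ) (j : ℕ) (ξ : Frq) (i : Fin 3) : ℂ :=
  (lam (qs j) ^ (2 * α - 4) : ℝ) *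
    Set.indicator (blockB (qs j) ∪ -blockB (qs j)) (fun ξ => ((esymb 0 ξ i : ℝ) : ℂ)) ξ

/-- The Fourier coefficients of `U = ∑_{j}(U_{q_j} + U_{q_j - 1})`. -/
def Uhat (α : ℝ) (qs : ℕ → ℕ) (ξ : Frq) (i : Fin 3) : ℂ :=
  ∑' j : ℕ, (UhatH α qs j ξ i + UhatL α qs j ξ i)

/-- The field `U_{q_j}` (with Fourier coefficients `UhatH`). -/
def UpH (α : ℝ) (qs : ℕ → ℕ) (j : ℕ) : VF := fun x i =>
  (∑' ξ : Frq, UhatH α qs j ξ i * fchar ξ x).re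

/-- The field `U_{q_j - 1}` (with Fourier coefficients `UhatL`). -/
def UpL (α : ℝ) (qs : ℕ → ℕ) (j : ℕ) : VF := fun x i =>
  (∑' ξ : Frq, UhatL α qs j ξ i * fchar ξ x).re

/-- `Ũ_{q_j} = U_{q_j-1} + U_{q_j}` (as `U` has no modes in the `(q_j+1)`-st shell). -/
def Upt (α : ℝ) (qs : ℕ → ℕ) (j : ℕ) : VF := fun x i => UpL α qs j x i + UpH α qs j x i

/-- `U_{≤ q_{j-1}} = ∑_{k ≤ j-1} (U_{q_k} + U_{q_k - 1})`. -/
def UleBlocks (α : ℝ) (qs : ℕ → ℕ) (j : ℕ) : VF := fun x i =>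
  ∑ k ∈ Finset.range j, (UpL α qs k x i + UpH α qs k x i)

/-- The sequence `(q_j)` is strictly increasing, consists of positive integers, and is lacunary
enough: `λ_{q_j}^{2α} λ_{q_{j+1}}^{4α-5} < 1`. -/
def GoodSeq (α : ℝ) (qs : ℕ → ℕ) : Prop :=
  StrictMono qs ∧ (∀ j, 1 ≤ qs j) ∧
    ∀ j, lam (qs j) ^ (2 * α) * lam (qs (j + 1)) ^ (4 * α - 5) < 1

/-- Energy dissipation `E(t) = ∫₀ᵗ | |∇|^a u(s) |₂² ds`. -/
def En (a : ℝ) (u : ℝ → VF) (t : ℝ) : ℝ := ∫ s in Set.Ioo (0 : ℝ) t, (sobn a (u s)) ^ 2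

/-- A weak solution on `[0,T)` of the fractional Navier–Stokes equations
`∂_t u + (u·∇)u + ∇p = -ν(-Δ)^α u`, `∇·u = 0`, with initial datum `U`:
`u ∈ C_w([0,T); L²) ∩ L²([0,T); H¹)`, divergence-free, the equation holds distributionally
(encoded mode-by-mode, with the pressure eliminated by the Leray projection), and
`u(t) → U` strongly in `L²` as `t → 0+`. -/
structure IsWeakSolution (α ν T : ℝ) (u : ℝ → VF) (U : VF) : Prop where
  memL2 : ∀ t ∈ Set.Ico (0 : ℝ) T, MemLp (u t) 2 μT
  weakCont : ∀ φ : VF, MemLp φ 2 μT →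
    ContinuousOn (fun t => ∫ x in torusCube, ∑ i, u t x i * φ x i) (Set.Ico 0 T)
  l2h1 : IntegrableOn (fun s => (lpn 2 (u s)) ^ 2 + (sobn 1 (u s)) ^ 2) (Set.Ioo 0 T)
  h1fin : ∀ᵐ s ∂volume.restrict (Set.Ioo (0 : ℝ) T), sobSq 1 (u s) < ⊤
  divFree : ∀ t ∈ Set.Ico (0 : ℝ) T, ∀ ξ : Frq, ∑ i, (ξ i : ℂ) * fcoef (u t) ξ i = 0
  eqn : ∀ t ∈ Set.Ioo (0 : ℝ) T, ∀ ξ : Frq, ∀ i : Fin 3,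
    fcoef (u t) ξ i = fcoef U ξ i -
      ∫ s in Set.Ioo (0 : ℝ) t,
        ((ν : ℂ) * (freqNorm ξ ^ (2 * α) : ℝ) * fcoef (u s) ξ i
          + Complex.I * ∑ j : Fin 3, (lerayMat ξ i j : ℝ) *
              ∑ k : Fin 3, (ξ k : ℂ) * fcoefC (fun x => ((u s x k * u s x j : ℝ) : ℂ)) ξ)
  init : Tendsto (fun t => eLpNorm (fun x => u t x - U x) 2 μT) (𝓝[>] (0 : ℝ)) (𝓝 0)


section Helpers

lemma oneDim (k : ℤ) : ∫ x in Set.Ico (0:ℝ) (2*Real.pi), Complex.exp (Complex.I * k * x)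
    = if k = 0 then ((2*Real.pi : ℝ) : ℂ) else 0 := by
  have h1 : ∫ x in Set.Ico (0:ℝ) (2*Real.pi), Complex.exp (Complex.I * k * x)
      = ∫ x in (0:ℝ)..(2*Real.pi), Complex.exp (Complex.I * k * x) := by
    rw [intervalIntegral.integral_of_le (by positivity),
      Measure.restrict_congr_set (α := ℝ) (μ := volume) Ico_ae_eq_Ioc]
  rw [h1]
  rcases eq_or_ne k 0 with rfl | hk
  · simp
  · have hc : Complex.I * k ≠ 0 := by simp [Complex.I_ne_zero, hk]
    rw [show (fun x : ℝ => Complex.exp (Complex.I * k * x)) = fun x : ℝ => Complex.exp ((Complex.I * k) * x) from rfl,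
      integral_exp_mul_complex hc]
    have : Complex.exp (Complex.I * k * (2*(Real.pi:ℂ))) = 1 := by
      rw [show Complex.I * k * (2*(Real.pi:ℂ)) = k * (2 * Real.pi * Complex.I) by push_cast; ring]
      exact Complex.exp_int_mul_two_pi_mul_I k
    simp [this, hk]

lemma torusCube_meas : MeasurableSet torusCube :=
  MeasurableSet.univ_pi (fun _ => measurableSet_Ico)

lemma torusCube_vol : volume torusCube = ENNReal.ofReal (2*Real.pi) ^ 3 := by
  rw [torusCube, volume_pi_pi]
  simp [Real.volume_Ico]

instance : IsFiniteMeasure μT := by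
  constructor
  rw [μT, Measure.restrict_apply_univ, torusCube_vol]
  exact ENNReal.pow_lt_top ENNReal.ofReal_lt_top

lemma fchar_eq_prod (ξ : Frq) (x : Pt) :
    fchar ξ x = ∏ i, Complex.exp (Complex.I * (ξ i) * (x i)) := by
  rw [fchar, ← Complex.exp_sum]
  congr 1
  rw [fdot]
  push_cast
  rw [Finset.mul_sum]
  ring_nf

lemma μT_eq : μT = volume.restrict torusCube := rfl

lemma integral_fchar (ξ : Frq) :
    ∫ x, fchar ξ x ∂μT = if ξ = 0 then (((2*Real.pi)^3 : ℝ) : ℂ) else 0 := by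
  rw [μT_eq]
  have key : ∫ x in torusCube, fchar ξ x
      = ∏ i, ∫ t in Set.Ico (0:ℝ) (2*Real.pi), Complex.exp (Complex.I * (ξ i) * t) := by
    rw [← integral_indicator torusCube_meas]
    have : ∀ x : Pt, torusCube.indicator (fchar ξ) x
        = ∏ i, (Set.Ico (0:ℝ) (2*Real.pi)).indicator (fun t => Complex.exp (Complex.I * (ξ i) * t)) (x i) := by
      intro x
      by_cases hx : x ∈ torusCube
      · rw [Set.indicator_of_mem hx, fchar_eq_prod]
        refine Finset.prod_congr rfl fun i _ => ?_
        rw [Set.indicator_of_mem (hx i (Set.mem_univ i))]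
      · rw [Set.indicator_of_notMem hx]
        have hx' : ∃ i, x i ∉ Set.Ico (0:ℝ) (2*Real.pi) := by
          by_contra h
          push_neg at h
          exact hx fun i _ => h i
        obtain ⟨i, hi⟩ := hx'
        refine (Finset.prod_eq_zero (Finset.mem_univ i) ?_).symm
        rw [Set.indicator_of_notMem hi]
    simp_rw [this]
    rw [MeasureTheory.volume_pi, MeasureTheory.integral_fintype_prod_eq_prod (ι := Fin 3)
      (f := fun i t => (Set.Ico (0:ℝ) (2*Real.pi)).indicator (fun t => Complex.exp (Complex.I * (ξ i) * t)) t)]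
    exact Finset.prod_congr rfl fun i _ => (integral_indicator measurableSet_Ico)
  rw [key]
  simp_rw [oneDim]
  by_cases hξ : ξ = 0
  · subst hξ
    simp only [if_pos rfl]
    have : ∀ i : Fin 3, ((0:Frq) i = 0) := fun i => rfl
    simp only [Pi.zero_apply, if_pos rfl]
    rw [Finset.prod_const, Finset.card_univ, Fintype.card_fin]
    push_cast
    ring_nf
  · obtain ⟨i, hi⟩ := Function.ne_iff.1 hξ
    rw [if_neg hξ]
    refine Finset.prod_eq_zero (Finset.mem_univ i) ?_
    rw [if_neg (by simpa using hi)]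

lemma fdot_sub (ξ η : Frq) (x : Pt) : fdot (ξ - η) x = fdot ξ x - fdot η x := by
  simp only [fdot, ← Finset.sum_sub_distrib]
  refine Finset.sum_congr rfl fun i _ => ?_
  push_cast [Pi.sub_apply]
  ring

lemma fdot_neg (ξ : Frq) (x : Pt) : fdot (-ξ) x = -fdot ξ x := by
  simp only [fdot, ← Finset.sum_neg_distrib]
  refine Finset.sum_congr rfl fun i _ => ?_
  push_cast [Pi.neg_apply]
  ring

lemma conj_fchar (ξ : Frq) (x : Pt) : (starRingEnd ℂ) (fchar ξ x) = fchar (-ξ) x := by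
  rw [fchar, fchar, ← Complex.exp_conj]
  congr 1
  rw [fdot_neg]
  push_cast
  simp [Complex.conj_I]

lemma fchar_mul_conj (ξ η : Frq) (x : Pt) :
    fchar ξ x * (starRingEnd ℂ) (fchar η x) = fchar (ξ - η) x := by
  rw [conj_fchar, fchar, fchar, fchar, ← Complex.exp_add]
  congr 1
  rw [fdot_sub, fdot_neg]
  push_cast
  ring

lemma fchar_abs (ξ : Frq) (x : Pt) : ‖fchar ξ x‖ = 1 := by
  rw [fchar, Complex.norm_exp]
  norm_num

lemma fchar_continuous (ξ : Frq) : Continuous (fchar ξ) := by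
  apply Complex.continuous_exp.comp
  apply Continuous.mul continuous_const
  exact Complex.continuous_ofReal.comp
    (continuous_finset_sum _ fun i _ => (continuous_const.mul (continuous_apply i)))

lemma integrable_fchar (ξ : Frq) : Integrable (fchar ξ) μT := by
  refine ⟨(fchar_continuous ξ).aestronglyMeasurable, ?_⟩
  apply MeasureTheory.HasFiniteIntegral.of_bounded (C := 1)
  filter_upwards with x
  simp [fchar_abs]

lemma integral_fchar_mul_conj (ξ η : Frq) :
    ∫ x, fchar ξ x * (starRingEnd ℂ) (fchar η x) ∂μT
      = if ξ = η then (((2*Real.pi)^3 : ℝ) : ℂ) else 0 := by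
  simp_rw [fchar_mul_conj]
  rw [integral_fchar]
  congr 1
  simp [sub_eq_zero]

lemma plancherel_sq (S : Finset Frq) (b : Frq → ℂ) :
    ∫ x, (∑ ξ ∈ S, b ξ * fchar ξ x) * (starRingEnd ℂ) (∑ η ∈ S, b η * fchar η x) ∂μT
      = (((2*Real.pi)^3 : ℝ) : ℂ) * ∑ ξ ∈ S, ((Complex.normSq (b ξ) : ℝ) : ℂ) := by
  have expand : ∀ x : Pt, (∑ ξ ∈ S, b ξ * fchar ξ x) * (starRingEnd ℂ) (∑ η ∈ S, b η * fchar η x)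
      = ∑ ξ ∈ S, ∑ η ∈ S, (b ξ * (starRingEnd ℂ) (b η)) * fchar (ξ - η) x := by
    intro x
    rw [map_sum, Finset.sum_mul_sum]
    refine Finset.sum_congr rfl fun ξ _ => Finset.sum_congr rfl fun η _ => ?_
    rw [map_mul, ← fchar_mul_conj]
    ring
  simp_rw [expand]
  rw [integral_finset_sum _ (fun ξ _ => integrable_finset_sum _
    (fun η _ => ((integrable_fchar (ξ - η)).const_mul _)))]
  have : ∀ ξ ∈ S, ∫ x, (∑ η ∈ S, (b ξ * (starRingEnd ℂ) (b η)) * fchar (ξ - η) x) ∂μT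
      = ∑ η ∈ S, (b ξ * (starRingEnd ℂ) (b η)) * (if ξ = η then (((2*Real.pi)^3 : ℝ) : ℂ) else 0) := by
    intro ξ _
    rw [integral_finset_sum _ (fun η _ => ((integrable_fchar (ξ - η)).const_mul _))]
    refine Finset.sum_congr rfl fun η _ => ?_
    rw [integral_const_mul]
    congr 1
    rw [integral_fchar]
    congr 1
    simp [sub_eq_zero]
  rw [Finset.sum_congr rfl this, Finset.mul_sum]
  refine Finset.sum_congr rfl fun ξ hξ => ?_
  rw [Finset.sum_eq_single ξ]
  · rw [if_pos rfl, Complex.mul_conj]; ring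
  · intro η _ hη; rw [if_neg (Ne.symm hη), mul_zero]
  · intro h; exact absurd hξ h

lemma sum_conj_eq (S : Finset Frq) (b : Frq → ℂ) (hsupp : ∀ ξ ∉ S, b ξ = 0)
    (hherm : ∀ ξ, b (-ξ) = (starRingEnd ℂ) (b ξ)) (x : Pt) :
    (starRingEnd ℂ) (∑ ξ ∈ S, b ξ * fchar ξ x) = ∑ ξ ∈ S, b ξ * fchar ξ x := by
  rw [map_sum]
  have h1 : ∀ ξ ∈ S, (starRingEnd ℂ) (b ξ * fchar ξ x) = b (-ξ) * fchar (-ξ) x := by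
    intro ξ _
    rw [map_mul, conj_fchar, ← hherm]
  rw [Finset.sum_congr rfl h1,
    show (∑ ξ ∈ S, b (-ξ) * fchar (-ξ) x) = ∑ ξ ∈ S.image (fun ξ => -ξ), b ξ * fchar ξ x from
      (Finset.sum_image (f := fun ξ => b ξ * fchar ξ x) (g := fun ξ => -ξ) (s := S)
        (fun a _ c _ h => neg_injective h)).symm]
  set T := S.image (fun ξ => -ξ) with hT
  have hmemT : ∀ ξ, ξ ∈ T ↔ -ξ ∈ S := by
    intro ξ
    constructor
    · intro h
      obtain ⟨a, ha, rfl⟩ := Finset.mem_image.1 h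
      rwa [neg_neg]
    · intro h
      exact Finset.mem_image.2 ⟨-ξ, h, neg_neg ξ⟩
  have hTU : ∑ ξ ∈ T, b ξ * fchar ξ x = ∑ ξ ∈ S ∪ T, b ξ * fchar ξ x := by
    refine (Finset.sum_subset Finset.subset_union_right fun ξ _ hξ => ?_)
    have hb : b (-ξ) = 0 := hsupp _ (fun hc => hξ ((hmemT ξ).2 hc))
    rw [hherm] at hb
    rw [star_eq_zero.1 hb, zero_mul]
  have hSU : ∑ ξ ∈ S, b ξ * fchar ξ x = ∑ ξ ∈ S ∪ T, b ξ * fchar ξ x := by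
    refine (Finset.sum_subset Finset.subset_union_left fun ξ _ hξ => ?_)
    rw [hsupp ξ hξ, zero_mul]
  rw [hTU, hSU]

lemma integral_re_sq (S : Finset Frq) (b : Frq → ℂ) (hsupp : ∀ ξ ∉ S, b ξ = 0)
    (hherm : ∀ ξ, b (-ξ) = (starRingEnd ℂ) (b ξ)) :
    ∫ x, ((∑ ξ ∈ S, b ξ * fchar ξ x).re)^2 ∂μT
      = (2*Real.pi)^3 * ∑ ξ ∈ S, Complex.normSq (b ξ) := by
  have hre : ∀ x : Pt, (((∑ ξ ∈ S, b ξ * fchar ξ x).re)^2 : ℝ)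
      = Complex.normSq (∑ ξ ∈ S, b ξ * fchar ξ x) := by
    intro x
    have him : (∑ ξ ∈ S, b ξ * fchar ξ x).im = 0 :=
      Complex.conj_eq_iff_im.1 (sum_conj_eq S b hsupp hherm x)
    rw [Complex.normSq_apply, him]
    ring
  simp_rw [hre]
  have hint : Integrable (fun x =>
      (∑ ξ ∈ S, b ξ * fchar ξ x) * (starRingEnd ℂ) (∑ η ∈ S, b η * fchar η x)) μT := by
    have hc : Continuous (fun x : Pt => ∑ ξ ∈ S, b ξ * fchar ξ x) :=
      continuous_finset_sum _ fun ξ _ => continuous_const.mul (fchar_continuous ξ)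
    refine ⟨(hc.mul (Complex.continuous_conj.comp hc)).aestronglyMeasurable, ?_⟩
    apply MeasureTheory.HasFiniteIntegral.of_bounded
      (C := (∑ ξ ∈ S, ‖b ξ‖) * (∑ ξ ∈ S, ‖b ξ‖))
    filter_upwards with x
    have hb : ‖∑ ξ ∈ S, b ξ * fchar ξ x‖ ≤ ∑ ξ ∈ S, ‖b ξ‖ := by
      refine (norm_sum_le _ _).trans (le_of_eq ?_)
      refine Finset.sum_congr rfl fun ξ _ => ?_
      rw [norm_mul, fchar_abs, mul_one]
    rw [norm_mul, Complex.norm_conj]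
    exact mul_le_mul hb hb (norm_nonneg _) (Finset.sum_nonneg fun _ _ => norm_nonneg _)
  have h2 := congrArg Complex.re (plancherel_sq S b)
  rw [← RCLike.re_eq_complex_re, ← integral_re hint] at h2
  have hL : ∫ x, RCLike.re ((∑ ξ ∈ S, b ξ * fchar ξ x) * (starRingEnd ℂ) (∑ η ∈ S, b η * fchar η x)) ∂μT
      = ∫ x, Complex.normSq (∑ ξ ∈ S, b ξ * fchar ξ x) ∂μT := by
    refine integral_congr_ae (Filter.Eventually.of_forall fun x => ?_)
    show ((∑ ξ ∈ S, b ξ * fchar ξ x) * (starRingEnd ℂ) (∑ η ∈ S, b η * fchar η x)).re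
      = Complex.normSq (∑ ξ ∈ S, b ξ * fchar ξ x)
    rw [Complex.mul_conj, Complex.ofReal_re]
  have hR : RCLike.re ((((2*Real.pi)^3 : ℝ) : ℂ) * ∑ ξ ∈ S, ((Complex.normSq (b ξ) : ℝ) : ℂ))
      = (2*Real.pi)^3 * ∑ ξ ∈ S, Complex.normSq (b ξ) := by
    rw [RCLike.re_eq_complex_re, ← Complex.ofReal_sum, ← Complex.ofReal_mul, Complex.ofReal_re]
  rw [hL, hR] at h2
  exact h2


lemma norm_vec_sq_le (v : Vec) : ‖v‖^2 ≤ ∑ i, (v i)^2 := by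
  have h : ‖v‖ ≤ Real.sqrt (∑ i, (v i)^2) := by
    rw [pi_norm_le_iff_of_nonneg (Real.sqrt_nonneg _)]
    intro i
    rw [show ‖v i‖ = Real.sqrt ((v i)^2) by rw [Real.sqrt_sq_eq_abs, Real.norm_eq_abs]]
    exact Real.sqrt_le_sqrt (Finset.single_le_sum (f := fun i => (v i)^2)
      (fun _ _ => sq_nonneg _) (Finset.mem_univ i))
  calc ‖v‖^2 ≤ Real.sqrt (∑ i, (v i)^2)^2 := by
        exact pow_le_pow_left₀ (norm_nonneg _) h 2
    _ = ∑ i, (v i)^2 := Real.sq_sqrt (Finset.sum_nonneg fun _ _ => sq_nonneg _)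

lemma sum_sq_le_norm (v : Vec) : ∑ i, (v i)^2 ≤ 3 * ‖v‖^2 := by
  have h : ∀ i, (v i)^2 ≤ ‖v‖^2 := by
    intro i
    have := norm_le_pi_norm v i
    calc (v i)^2 = ‖v i‖^2 := by rw [Real.norm_eq_abs, _root_.sq_abs]
      _ ≤ ‖v‖^2 := pow_le_pow_left₀ (norm_nonneg _) this 2
  calc ∑ i, (v i)^2 ≤ ∑ _i : Fin 3, ‖v‖^2 := Finset.sum_le_sum fun i _ => h i
    _ = 3 * ‖v‖^2 := by rw [Finset.sum_const, Finset.card_univ, Fintype.card_fin, nsmul_eq_mul]; norm_num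

lemma toReal_ofReal_rpow_half (P : ℝ) (hP : 0 ≤ P) :
    (ENNReal.ofReal P ^ (1/(2:ℝ))).toReal = Real.sqrt P := by
  rw [ENNReal.ofReal_rpow_of_nonneg hP (by norm_num : (0:ℝ) ≤ 1/2),
    ENNReal.toReal_ofReal (Real.rpow_nonneg hP _), Real.sqrt_eq_rpow]

lemma lpn_bounds (u : VF) (P : ℝ) (hP : 0 ≤ P)
    (hmeas : AEStronglyMeasurable u μT)
    (hint : Integrable (fun x => ∑ i, (u x i)^2) μT)
    (hPeq : ∫ x, (∑ i, (u x i)^2) ∂μT = P) :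
    Real.sqrt (P / 3) ≤ lpn 2 u ∧ lpn 2 u ≤ Real.sqrt P := by
  have h2 : (2 : ℝ≥0∞) ≠ 0 := by norm_num
  have ht : (2 : ℝ≥0∞) ≠ ⊤ := by norm_num
  have hform : eLpNorm u 2 μT = (∫⁻ x, ((‖u x‖₊ : ℝ≥0∞)) ^ (2 : ℝ≥0∞).toReal ∂μT) ^ (1 / (2 : ℝ≥0∞).toReal) :=
    eLpNorm_eq_lintegral_rpow_enorm_toReal h2 ht
  have htr : (2 : ℝ≥0∞).toReal = (2 : ℝ) := by norm_num
  rw [htr] at hform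
  have hpt : ∀ x, ((‖u x‖₊ : ℝ≥0∞)) ^ (2:ℝ) = ENNReal.ofReal (‖u x‖^2) := by
    intro x
    rw [← ENNReal.ofReal_coe_nnreal, coe_nnnorm, ENNReal.ofReal_rpow_of_nonneg (norm_nonneg _) (by norm_num)]
    norm_num [Real.rpow_natCast (‖u x‖) 2]
  have hub : ∫⁻ x, ((‖u x‖₊ : ℝ≥0∞)) ^ (2:ℝ) ∂μT ≤ ENNReal.ofReal P := by
    rw [← hPeq, ofReal_integral_eq_lintegral_ofReal hint
      (Filter.Eventually.of_forall fun x => Finset.sum_nonneg fun _ _ => sq_nonneg _)]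
    refine lintegral_mono fun x => ?_
    rw [hpt x]
    exact ENNReal.ofReal_le_ofReal (norm_vec_sq_le (u x))
  have hlb : ENNReal.ofReal (P / 3) ≤ ∫⁻ x, ((‖u x‖₊ : ℝ≥0∞)) ^ (2:ℝ) ∂μT := by
    have hint3 : Integrable (fun x => (∑ i, (u x i)^2) / 3) μT := hint.div_const 3
    have h3 : ∫ x, ((∑ i, (u x i)^2) / 3) ∂μT = P / 3 := by
      rw [integral_div, hPeq]
    rw [← h3, ofReal_integral_eq_lintegral_ofReal hint3
      (Filter.Eventually.of_forall fun x => by positivity)]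
    refine lintegral_mono fun x => ?_
    rw [hpt x]
    refine ENNReal.ofReal_le_ofReal ?_
    rw [div_le_iff₀ (by norm_num : (0:ℝ) < 3)]
    calc ∑ i, (u x i)^2 ≤ 3 * ‖u x‖^2 := sum_sq_le_norm (u x)
      _ = ‖u x‖^2 * 3 := by ring
  constructor
  · have : ENNReal.ofReal (P/3) ^ (1/(2:ℝ)) ≤ eLpNorm u 2 μT := by
      rw [hform]
      exact ENNReal.rpow_le_rpow hlb (by norm_num)
    have hfin : eLpNorm u 2 μT ≤ ENNReal.ofReal P ^ (1/(2:ℝ)) := by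
      rw [hform]; exact ENNReal.rpow_le_rpow hub (by norm_num)
    have hfin' : eLpNorm u 2 μT ≠ ⊤ :=
      ne_top_of_le_ne_top (by simp [ENNReal.rpow_ne_top_of_nonneg]) hfin
    have := ENNReal.toReal_mono hfin' this
    rw [lpn]
    exact le_trans (le_of_eq (toReal_ofReal_rpow_half _ (by positivity)).symm) this
  · have hfin : eLpNorm u 2 μT ≤ ENNReal.ofReal P ^ (1/(2:ℝ)) := by
      rw [hform]; exact ENNReal.rpow_le_rpow hub (by norm_num)
    have := ENNReal.toReal_mono (by simp [ENNReal.rpow_ne_top_of_nonneg]) hfin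
    rw [lpn]
    exact le_trans this (le_of_eq (toReal_ofReal_rpow_half _ hP))


end Helpers


section App

lemma lam_pos (m : ℕ) : 0 < lam m := by rw [lam]; positivity

lemma lam_ge_two (m : ℕ) (hm : 1 ≤ m) : 2 ≤ lam m := by
  rw [lam]
  calc (2:ℝ) = 2^1 := (pow_one 2).symm
    _ ≤ 2^m := pow_le_pow_right₀ one_le_two hm

lemma lam_pred (m : ℕ) (hm : 1 ≤ m) : lam (m - 1) = lam m / 2 := by
  rw [lam, lam]
  rcases Nat.exists_eq_add_of_le hm with ⟨k, rfl⟩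
  have h1 : 1 + k - 1 = k := by omega
  rw [h1, pow_add, pow_one]
  ring

lemma sumsq_pos {ξ : Frq} (hξ : ξ ≠ 0) : 0 < ∑ m, ((ξ m : ℝ))^2 := by
  obtain ⟨i, hi⟩ := Function.ne_iff.1 hξ
  have : (0:ℝ) < ((ξ i : ℝ))^2 := by
    have : (ξ i : ℝ) ≠ 0 := Int.cast_ne_zero.2 (by simpa using hi)
    positivity
  refine lt_of_lt_of_le this ?_
  exact Finset.single_le_sum (f := fun m => ((ξ m : ℝ))^2) (fun _ _ => sq_nonneg _)
    (Finset.mem_univ i)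

lemma mul_le_sumsq (ξ : Frq) (i k : Fin 3) : |(ξ i : ℝ) * (ξ k : ℝ)| ≤ ∑ m, ((ξ m : ℝ))^2 := by
  rcases eq_or_ne i k with rfl | hik
  · rw [← sq, abs_of_nonneg (sq_nonneg _)]
    exact Finset.single_le_sum (f := fun m => ((ξ m : ℝ))^2) (fun _ _ => sq_nonneg _)
      (Finset.mem_univ i)
  · rw [abs_mul]
    have h1 : |(ξ i : ℝ)| * |(ξ k : ℝ)| ≤ (((ξ i : ℝ))^2 + ((ξ k : ℝ))^2) := by
      nlinarith [sq_nonneg (|(ξ i : ℝ)| - |(ξ k : ℝ)|), sq_abs ((ξ i : ℝ)), sq_abs ((ξ k : ℝ))]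
    refine h1.trans (le_trans (le_of_eq
      (Finset.sum_pair (f := fun m => ((ξ m : ℝ))^2) hik).symm) ?_)
    exact Finset.sum_le_sum_of_subset_of_nonneg (Finset.subset_univ _)
      (fun _ _ _ => sq_nonneg _)

lemma esymb_bound (k : Fin 3) (ξ : Frq) (i : Fin 3) : |esymb k ξ i| ≤ 2 := by
  rw [esymb]
  split_ifs with h
  · rw [Pi.single_apply]
    split_ifs <;> norm_num
  · beta_reduce
    have hs := sumsq_pos h
    have h2 : |(ξ i : ℝ) * (ξ k : ℝ) / (∑ m, ((ξ m : ℝ))^2)| ≤ 1 := by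
      rw [abs_div, abs_of_pos hs, div_le_one hs]
      exact mul_le_sumsq ξ i k
    have h1 : |(Pi.single k 1 : Vec) i| ≤ 1 := by
      rcases eq_or_ne i k with rfl | hik
      · simp
      · simp [Pi.single_apply, if_neg hik]
    calc |(Pi.single k 1 : Vec) i - (ξ i : ℝ) * (ξ k : ℝ) / (∑ m, ((ξ m : ℝ))^2)|
        ≤ |(Pi.single k 1 : Vec) i| + |(ξ i : ℝ) * (ξ k : ℝ) / (∑ m, ((ξ m : ℝ))^2)| := abs_sub _ _
      _ ≤ 1 + 1 := add_le_add h1 h2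
      _ = 2 := by norm_num

lemma esymb_neg (k : Fin 3) (ξ : Frq) : esymb k (-ξ) = esymb k ξ := by
  rcases eq_or_ne ξ 0 with rfl | hξ
  · simp [esymb]
  · rw [esymb, esymb, if_neg (neg_ne_zero.2 hξ), if_neg hξ]
    funext i
    have h1 : (((-ξ) i : ℝ)) = -((ξ i : ℝ)) := by push_cast [Pi.neg_apply]; ring
    have h2 : ∀ m, (((-ξ) m : ℝ))^2 = ((ξ m : ℝ))^2 := by
      intro m; push_cast [Pi.neg_apply]; ring
    simp_rw [h1, h2]
    have h3 : (((-ξ) k : ℝ)) = -((ξ k : ℝ)) := by push_cast [Pi.neg_apply]; ring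
    rw [h3]
    ring

lemma indicator_ofReal (S : Set Frq) (g : Frq → ℝ) (ζ : Frq) :
    Set.indicator S (fun ξ => ((g ξ : ℝ) : ℂ)) ζ = ((S.indicator g ζ : ℝ) : ℂ) := by
  by_cases h : ζ ∈ S
  · rw [Set.indicator_of_mem h, Set.indicator_of_mem h]
  · rw [Set.indicator_of_notMem h, Set.indicator_of_notMem h, Complex.ofReal_zero]

/-- real indicators entering `UhatH` -/
def IA (m : ℕ) (i : Fin 3) (ξ : Frq) : ℝ :=
  Set.indicator (blockA m ∪ -blockA m) (fun ξ => esymb 1 ξ i) ξ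
def IC (m : ℕ) (i : Fin 3) (ξ : Frq) : ℝ :=
  Set.indicator (blockC m) (fun ξ => esymb 1 ξ i - esymb 0 ξ i) ξ
def IC' (m : ℕ) (i : Fin 3) (ξ : Frq) : ℝ :=
  Set.indicator (-blockC m) (fun ξ => esymb 1 ξ i - esymb 0 ξ i) ξ

lemma UhatH_eq (α : ℝ) (qs : ℕ → ℕ) (j : ℕ) (ξ : Frq) (i : Fin 3) :
    UhatH α qs j ξ i
      = ((lam (qs j) ^ (2 * α - 4) * IA (qs j) i ξ : ℝ) : ℂ)
        + ((lam (qs j) ^ (2 * α - 4) * (IC (qs j) i ξ - IC' (qs j) i ξ) : ℝ) : ℂ) * Complex.I := by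
  rw [UhatH, IA, IC, IC']
  rw [indicator_ofReal, indicator_ofReal, indicator_ofReal]
  push_cast
  ring

lemma normSq_UhatH (α : ℝ) (qs : ℕ → ℕ) (j : ℕ) (ξ : Frq) (i : Fin 3) :
    Complex.normSq (UhatH α qs j ξ i)
      = (lam (qs j) ^ (2 * α - 4) * IA (qs j) i ξ)^2
        + (lam (qs j) ^ (2 * α - 4) * (IC (qs j) i ξ - IC' (qs j) i ξ))^2 := by
  rw [UhatH_eq, Complex.normSq_add_mul_I]

lemma abs_indicator_le (S : Set Frq) (g : Frq → ℝ) (B : ℝ) (hB : 0 ≤ B)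
    (h : ∀ ζ, |g ζ| ≤ B) (ζ : Frq) : |S.indicator g ζ| ≤ B := by
  by_cases hm : ζ ∈ S
  · rw [Set.indicator_of_mem hm]; exact h ζ
  · rw [Set.indicator_of_notMem hm, abs_zero]; exact hB

lemma abs_IA_le (m : ℕ) (i : Fin 3) (ξ : Frq) : |IA m i ξ| ≤ 2 :=
  abs_indicator_le _ _ 2 (by norm_num) (fun ζ => esymb_bound 1 ζ i) ξ

lemma abs_ICsub_le (m : ℕ) (i : Fin 3) (ξ : Frq) : ∀ S : Set Frq,
    |Set.indicator S (fun ξ => esymb 1 ξ i - esymb 0 ξ i) ξ| ≤ 4 := by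
  intro S
  refine abs_indicator_le _ _ 4 (by norm_num) (fun ζ => ?_) ξ
  calc |esymb 1 ζ i - esymb 0 ζ i| ≤ |esymb 1 ζ i| + |esymb 0 ζ i| := abs_sub _ _
    _ ≤ 2 + 2 := add_le_add (esymb_bound 1 ζ i) (esymb_bound 0 ζ i)
    _ = 4 := by norm_num

lemma normSq_UhatH_le (α : ℝ) (qs : ℕ → ℕ) (j : ℕ) (ξ : Frq) (i : Fin 3) :
    Complex.normSq (UhatH α qs j ξ i) ≤ 100 * (lam (qs j) ^ (2 * α - 4))^2 := by
  rw [normSq_UhatH]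
  set K := lam (qs j) ^ (2 * α - 4) with hK
  have hK0 : 0 ≤ K := le_of_lt (Real.rpow_pos_of_pos (lam_pos _) _)
  have h1 : |IA (qs j) i ξ| ≤ 2 := abs_IA_le _ _ _
  have ha : |IC (qs j) i ξ| ≤ 4 := by rw [IC]; exact abs_ICsub_le (qs j) i ξ _
  have hb : |IC' (qs j) i ξ| ≤ 4 := by rw [IC']; exact abs_ICsub_le (qs j) i ξ _
  have h2 : |IC (qs j) i ξ - IC' (qs j) i ξ| ≤ 8 := by
    calc |IC (qs j) i ξ - IC' (qs j) i ξ| ≤ |IC (qs j) i ξ| + |IC' (qs j) i ξ| := abs_sub _ _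
      _ ≤ 4 + 4 := add_le_add ha hb
      _ = 8 := by norm_num
  have e1 : (K * IA (qs j) i ξ)^2 ≤ K^2 * 4 := by
    rw [mul_pow]
    have : (IA (qs j) i ξ)^2 ≤ 4 := by nlinarith [abs_nonneg (IA (qs j) i ξ), sq_abs (IA (qs j) i ξ)]
    nlinarith [sq_nonneg K]
  have e2 : (K * (IC (qs j) i ξ - IC' (qs j) i ξ))^2 ≤ K^2 * 64 := by
    rw [mul_pow]
    have : (IC (qs j) i ξ - IC' (qs j) i ξ)^2 ≤ 64 := by
      nlinarith [abs_nonneg (IC (qs j) i ξ - IC' (qs j) i ξ), sq_abs (IC (qs j) i ξ - IC' (qs j) i ξ)]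
    nlinarith [sq_nonneg K]
  nlinarith [e1, e2]

/-- box of frequencies containing the support of `UhatH` -/
def boxF (m : ℕ) : Finset Frq :=
  Fintype.piFinset fun _ => Finset.Icc (-(2^(m+1) : ℤ)) (2^(m+1))

lemma mem_boxF_of {m : ℕ} {ξ : Frq} (h : ∀ i, |(ξ i : ℝ)| ≤ 2 * lam m) : ξ ∈ boxF m := by
  rw [boxF, Fintype.mem_piFinset]
  intro i
  rw [Finset.mem_Icc, ← abs_le]
  have h2 : ((2^(m+1) : ℤ) : ℝ) = 2 * lam m := by
    rw [lam]; push_cast; ring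
  have := h i
  rw [← h2] at this
  exact_mod_cast (by rwa [← Int.cast_abs] at this : ((|ξ i| : ℤ) : ℝ) ≤ ((2^(m+1):ℤ) : ℝ))

lemma blockA_coord {m : ℕ} {ξ : Frq} (h : ξ ∈ blockA m) (i : Fin 3) :
    |(ξ i : ℝ)| ≤ 11/10 * lam m := by
  obtain ⟨h0, h1, h2, h3⟩ := h
  have hl := lam_pos m
  fin_cases i
  · show |(ξ 0 : ℝ)| ≤ 11/10 * lam m
    rw [abs_le]; constructor <;> nlinarith
  · show |(ξ 1 : ℝ)| ≤ 11/10 * lam m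
    refine h2.trans (by nlinarith)
  · show |(ξ 2 : ℝ)| ≤ 11/10 * lam m
    refine h3.trans (by nlinarith)

lemma blockB_coord {m : ℕ} {ξ : Frq} (h : ξ ∈ blockB m) (i : Fin 3) :
    |(ξ i : ℝ)| ≤ 11/10 * lam (m - 1) := by
  obtain ⟨h0, h1, h2, h3⟩ := h
  have hl := lam_pos (m-1)
  fin_cases i
  · show |(ξ 0 : ℝ)| ≤ 11/10 * lam (m-1)
    refine h0.trans (by nlinarith)
  · show |(ξ 1 : ℝ)| ≤ 11/10 * lam (m-1)
    refine h1.trans (by nlinarith)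
  · show |(ξ 2 : ℝ)| ≤ 11/10 * lam (m-1)
    rw [abs_le]; constructor <;> nlinarith

lemma blockC_coord {m : ℕ} (hm : 1 ≤ m) {ξ : Frq} (h : ξ ∈ blockC m) (i : Fin 3) :
    |(ξ i : ℝ)| ≤ 2 * lam m := by
  rw [blockC] at h
  obtain ⟨a, ha, b, hb, rfl⟩ := Set.mem_add.1 h
  have h1 := blockA_coord ha i
  have h2 := blockB_coord hb i
  rw [lam_pred m hm] at h2
  have hl := lam_pos m
  have : (((a + b) i : ℝ)) = (a i : ℝ) + (b i : ℝ) := by push_cast [Pi.add_apply]; ring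
  rw [this]
  calc |(a i : ℝ) + (b i : ℝ)| ≤ |(a i : ℝ)| + |(b i : ℝ)| := abs_add_le _ _
    _ ≤ 11/10 * lam m + 11/10 * (lam m / 2) := add_le_add h1 h2
    _ ≤ 2 * lam m := by nlinarith

lemma neg_coord (ξ : Frq) (i : Fin 3) : |((-ξ) i : ℝ)| = |(ξ i : ℝ)| := by
  have : (((-ξ) i : ℝ)) = -(ξ i : ℝ) := by push_cast [Pi.neg_apply]; ring
  rw [this, abs_neg]

lemma UhatH_supp (α : ℝ) (qs : ℕ → ℕ) (hqs1 : ∀ j, 1 ≤ qs j) (j : ℕ) :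
    ∀ ξ ∉ boxF (qs j), ∀ i, UhatH α qs j ξ i = 0 := by
  intro ξ hξ i
  set m := qs j with hmm
  have hm := hqs1 j
  have hl := lam_pos m
  have hcoord : ¬ (∀ i, |(ξ i : ℝ)| ≤ 2 * lam m) := fun h => hξ (mem_boxF_of h)
  have hA : ξ ∉ blockA m ∪ -blockA m := by
    intro hc
    refine hcoord fun i => ?_
    rcases hc with hc | hc
    · exact (blockA_coord hc i).trans (by nlinarith)
    · rw [Set.mem_neg] at hc
      rw [← neg_coord]
      exact (blockA_coord hc i).trans (by nlinarith)
  have hC : ξ ∉ blockC m := fun hc => hcoord fun i => blockC_coord hm hc i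
  have hC' : ξ ∉ -blockC m := by
    intro hc
    rw [Set.mem_neg] at hc
    exact hcoord fun i => by rw [← neg_coord]; exact blockC_coord hm hc i
  rw [UhatH, Set.indicator_of_notMem hA, Set.indicator_of_notMem hC,
    Set.indicator_of_notMem hC']
  simp

lemma UhatH_herm (α : ℝ) (qs : ℕ → ℕ) (j : ℕ) (ξ : Frq) (i : Fin 3) :
    UhatH α qs j (-ξ) i = (starRingEnd ℂ) (UhatH α qs j ξ i) := by
  set m := qs j
  have hIA : IA m i (-ξ) = IA m i ξ := by
    rw [IA, IA]
    by_cases h : ξ ∈ blockA m ∪ -blockA m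
    · have h' : -ξ ∈ blockA m ∪ -blockA m := by
        rcases h with h | h
        · exact Or.inr (by rwa [Set.mem_neg, neg_neg])
        · exact Or.inl (by rwa [Set.mem_neg] at h)
      rw [Set.indicator_of_mem h', Set.indicator_of_mem h, esymb_neg]
    · have h' : -ξ ∉ blockA m ∪ -blockA m := by
        intro hc
        refine h ?_
        rcases hc with hc | hc
        · exact Or.inr (by rwa [Set.mem_neg])
        · exact Or.inl (by rwa [Set.mem_neg, neg_neg] at hc)
      rw [Set.indicator_of_notMem h', Set.indicator_of_notMem h]
  have hIC : IC m i (-ξ) = IC' m i ξ := by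
    rw [IC, IC']
    by_cases h : ξ ∈ -blockC m
    · rw [Set.mem_neg] at h
      rw [Set.indicator_of_mem h, Set.indicator_of_mem (Set.mem_neg.2 h), esymb_neg, esymb_neg]
    · rw [Set.indicator_of_notMem (fun hc => h (Set.mem_neg.2 hc)),
        Set.indicator_of_notMem (fun hc => h hc)]
  have hIC' : IC' m i (-ξ) = IC m i ξ := by
    rw [IC, IC']
    by_cases h : ξ ∈ blockC m
    · rw [Set.indicator_of_mem h, Set.indicator_of_mem (by rwa [Set.mem_neg, neg_neg]),
        esymb_neg, esymb_neg]
    · rw [Set.indicator_of_notMem (fun hc => h (by rwa [Set.mem_neg, neg_neg] at hc)),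
        Set.indicator_of_notMem (fun hc => h hc)]
  rw [UhatH_eq, UhatH_eq, hIA, hIC, hIC']
  rw [map_add, map_mul, Complex.conj_I]
  rw [Complex.conj_ofReal, Complex.conj_ofReal]
  push_cast
  ring

/-- Lattice cube inside `blockA m`. -/
def AfinI (m : ℕ) : Fin 3 → Finset ℤ := fun i =>
  if i = 0 then Finset.Icc ⌈(9/10 : ℝ) * lam m⌉ ⌊(11/10 : ℝ) * lam m⌋
  else Finset.Icc (-⌊lam m / 10⌋) ⌊lam m / 10⌋

def Afin (m : ℕ) : Finset Frq := Fintype.piFinset (AfinI m)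

lemma mem_blockA_of_Afin {m : ℕ} {ξ : Frq} (h : ξ ∈ Afin m) : ξ ∈ blockA m := by
  rw [Afin, Fintype.mem_piFinset] at h
  have h0 := h 0
  have h1 := h 1
  have h2 := h 2
  rw [AfinI, if_pos rfl, Finset.mem_Icc] at h0
  rw [AfinI, if_neg (by norm_num), Finset.mem_Icc] at h1
  rw [AfinI, if_neg (by decide), Finset.mem_Icc] at h2
  have key : ∀ k : ℤ, -⌊lam m / 10⌋ ≤ k → k ≤ ⌊lam m / 10⌋ → |(k : ℝ)| ≤ lam m / 10 := by
    intro k hk1 hk2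
    rw [abs_le]
    constructor
    · calc -(lam m / 10) ≤ -(⌊lam m / 10⌋ : ℝ) := neg_le_neg (Int.floor_le _)
        _ ≤ (k : ℝ) := by exact_mod_cast hk1
    · calc (k : ℝ) ≤ (⌊lam m / 10⌋ : ℝ) := by exact_mod_cast hk2
        _ ≤ lam m / 10 := Int.floor_le _
  refine ⟨?_, ?_, key _ h1.1 h1.2, key _ h2.1 h2.2⟩
  · calc (9/10 : ℝ) * lam m ≤ (⌈(9/10 : ℝ) * lam m⌉ : ℝ) := Int.le_ceil _
      _ ≤ (ξ 0 : ℝ) := by exact_mod_cast h0.1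
  · calc (ξ 0 : ℝ) ≤ (⌊(11/10 : ℝ) * lam m⌋ : ℝ) := by exact_mod_cast h0.2
      _ ≤ (11/10 : ℝ) * lam m := Int.floor_le _

lemma Afin_subset_boxF (m : ℕ) : Afin m ⊆ boxF m := by
  intro ξ h
  have hl := lam_pos m
  exact mem_boxF_of fun i => (blockA_coord (mem_blockA_of_Afin h) i).trans (by nlinarith)

lemma AfinI_card_ge (m : ℕ) (hm : 1 ≤ m) (i : Fin 3) :
    lam m / 10 ≤ ((AfinI m i).card : ℝ) := by
  have hl := lam_pos m
  have h2 := lam_ge_two m hm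
  -- the integer 2^m as midpoint
  have hmid : ((2^m : ℤ) : ℝ) = lam m := by rw [lam]; push_cast; ring
  rw [AfinI]
  split_ifs with h
  · have hab : ⌈(9/10 : ℝ) * lam m⌉ ≤ ⌊(11/10 : ℝ) * lam m⌋ := by
      calc ⌈(9/10 : ℝ) * lam m⌉ ≤ (2^m : ℤ) := Int.ceil_le.2 (by rw [hmid]; nlinarith)
        _ ≤ ⌊(11/10 : ℝ) * lam m⌋ := Int.le_floor.2 (by rw [hmid]; nlinarith)
    have hcard : (Finset.Icc ⌈(9/10 : ℝ) * lam m⌉ ⌊(11/10 : ℝ) * lam m⌋).card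
        = (⌊(11/10 : ℝ) * lam m⌋ + 1 - ⌈(9/10 : ℝ) * lam m⌉).toNat := Int.card_Icc _ _
    have hpos : (0:ℤ) ≤ ⌊(11/10 : ℝ) * lam m⌋ + 1 - ⌈(9/10 : ℝ) * lam m⌉ := by omega
    have hcR : ((Finset.Icc ⌈(9/10 : ℝ) * lam m⌉ ⌊(11/10 : ℝ) * lam m⌋).card : ℝ)
        = (⌊(11/10 : ℝ) * lam m⌋ : ℝ) + 1 - (⌈(9/10 : ℝ) * lam m⌉ : ℝ) := by
      rw [hcard]
      rw [show ((⌊(11/10 : ℝ) * lam m⌋ + 1 - ⌈(9/10 : ℝ) * lam m⌉).toNat : ℝ)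
        = (((⌊(11/10 : ℝ) * lam m⌋ + 1 - ⌈(9/10 : ℝ) * lam m⌉).toNat : ℤ) : ℝ) from by push_cast; ring]
      rw [Int.toNat_of_nonneg hpos]
      push_cast
      ring
    rw [hcR]
    have hf : (11/10 : ℝ) * lam m - 1 < (⌊(11/10 : ℝ) * lam m⌋ : ℝ) := Int.sub_one_lt_floor _
    have hc : (⌈(9/10 : ℝ) * lam m⌉ : ℝ) < (9/10 : ℝ) * lam m + 1 := Int.ceil_lt_add_one _
    have hge1 : (1:ℝ) ≤ (⌊(11/10 : ℝ) * lam m⌋ : ℝ) + 1 - (⌈(9/10 : ℝ) * lam m⌉ : ℝ) := by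
      have : (1:ℤ) ≤ ⌊(11/10 : ℝ) * lam m⌋ + 1 - ⌈(9/10 : ℝ) * lam m⌉ := by omega
      exact_mod_cast this
    by_cases hsm : lam m / 10 ≤ 1
    · linarith
    · linarith
  · have hfl : (0:ℤ) ≤ ⌊lam m / 10⌋ := Int.floor_nonneg.2 (by nlinarith)
    have hcard : (Finset.Icc (-⌊lam m / 10⌋) ⌊lam m / 10⌋).card
        = (⌊lam m / 10⌋ + 1 - (-⌊lam m / 10⌋)).toNat := Int.card_Icc _ _
    have hcR : ((Finset.Icc (-⌊lam m / 10⌋) ⌊lam m / 10⌋).card : ℝ)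
        = 2 * (⌊lam m / 10⌋ : ℝ) + 1 := by
      rw [hcard]
      rw [show ((⌊lam m / 10⌋ + 1 - (-⌊lam m / 10⌋)).toNat : ℝ)
        = (((⌊lam m / 10⌋ + 1 - (-⌊lam m / 10⌋)).toNat : ℤ) : ℝ) from by push_cast; ring]
      rw [Int.toNat_of_nonneg (by omega)]
      push_cast
      ring
    rw [hcR]
    have hf : lam m / 10 - 1 < (⌊lam m / 10⌋ : ℝ) := Int.sub_one_lt_floor _
    have hge0 : (0:ℝ) ≤ (⌊lam m / 10⌋ : ℝ) := by exact_mod_cast hfl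
    by_cases hsm : lam m / 10 ≤ 1
    · linarith
    · linarith

lemma Afin_card_ge (m : ℕ) (hm : 1 ≤ m) : (lam m / 10)^3 ≤ ((Afin m).card : ℝ) := by
  have hl := lam_pos m
  rw [Afin, Fintype.card_piFinset]
  rw [show ((∏ i, (AfinI m i).card : ℕ) : ℝ) = ∏ i, ((AfinI m i).card : ℝ) from by push_cast; ring]
  rw [Fin.prod_univ_three]
  have h0 := AfinI_card_ge m hm 0
  have h1 := AfinI_card_ge m hm 1
  have h2 := AfinI_card_ge m hm 2
  have hd : (0:ℝ) ≤ lam m / 10 := by nlinarith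
  calc (lam m / 10)^3 = (lam m/10) * (lam m/10) * (lam m/10) := by ring
    _ ≤ _ := by
      apply mul_le_mul (mul_le_mul h0 h1 hd (le_trans hd h0)) h2 hd
      positivity

lemma boxF_card_le (m : ℕ) (hm : 1 ≤ m) : ((boxF m).card : ℝ) ≤ (5 * lam m)^3 := by
  have hl := lam_pos m
  have h2l := lam_ge_two m hm
  rw [boxF, Fintype.card_piFinset]
  have hcR : ((Finset.Icc (-(2^(m+1) : ℤ)) (2^(m+1))).card : ℝ) = 4 * lam m + 1 := by
    rw [Int.card_Icc]
    have he : ((2^(m+1) : ℤ) + 1 - -2^(m+1)) = (2 * 2^(m+1) + 1 : ℤ) := by ring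
    rw [he, show (((2 * 2^(m+1) + 1 : ℤ)).toNat : ℝ) = ((((2 * 2^(m+1) + 1 : ℤ)).toNat : ℤ) : ℝ) from by push_cast; ring,
      Int.toNat_of_nonneg (by positivity), lam]
    push_cast
    ring
  rw [show ((∏ _i : Fin 3, (Finset.Icc (-(2^(m+1) : ℤ)) (2^(m+1))).card : ℕ) : ℝ)
      = ∏ _i : Fin 3, ((Finset.Icc (-(2^(m+1) : ℤ)) (2^(m+1))).card : ℝ) from by push_cast; ring]
  rw [Finset.prod_const, Finset.card_univ, Fintype.card_fin, hcR]
  have : 4 * lam m + 1 ≤ 5 * lam m := by nlinarith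
  exact pow_le_pow_left₀ (by nlinarith) this 3

lemma esymb_lower {m : ℕ} {ξ : Frq} (hξ : ξ ∈ blockA m) : 1/2 ≤ esymb 1 ξ 1 := by
  obtain ⟨h0, h1, h2, h3⟩ := hξ
  have hl := lam_pos m
  have h2l : (0:ℝ) < (ξ 0 : ℝ) := by nlinarith
  have hne : ξ ≠ 0 := by
    intro hc
    rw [hc] at h2l
    simp at h2l
  rw [esymb, if_neg hne]
  beta_reduce
  have hs : (ξ 0 : ℝ)^2 ≤ ∑ m, ((ξ m : ℝ))^2 :=
    Finset.single_le_sum (f := fun m => ((ξ m : ℝ))^2) (fun _ _ => sq_nonneg _) (Finset.mem_univ 0)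
  have hspos : (0:ℝ) < ∑ m, ((ξ m : ℝ))^2 := by nlinarith
  have hnum : ((ξ 1 : ℝ)) * ((ξ 1 : ℝ)) ≤ (∑ m, ((ξ m : ℝ))^2) / 2 := by
    have hξ1 : ((ξ 1 : ℝ))^2 ≤ (lam m / 10)^2 := by
      rw [← sq_abs]
      apply pow_le_pow_left₀ (abs_nonneg _) h2
    nlinarith
  have : (ξ 1 : ℝ) * (ξ 1 : ℝ) / (∑ m, ((ξ m : ℝ))^2) ≤ 1/2 := by
    rw [div_le_iff₀ hspos]
    nlinarith
  have hsingle : (Pi.single 1 1 : Vec) 1 = 1 := by simp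
  rw [hsingle]
  linarith

lemma normSq_UhatH_lower (α : ℝ) (qs : ℕ → ℕ) (j : ℕ) {ξ : Frq} (hξ : ξ ∈ blockA (qs j)) :
    (lam (qs j) ^ (2 * α - 4) / 2)^2 ≤ Complex.normSq (UhatH α qs j ξ 1) := by
  rw [normSq_UhatH]
  set K := lam (qs j) ^ (2 * α - 4) with hK
  have hK0 : 0 < K := Real.rpow_pos_of_pos (lam_pos _) _
  have hIA : IA (qs j) 1 ξ = esymb 1 ξ 1 := by
    rw [IA, Set.indicator_of_mem (Set.mem_union_left _ hξ)]
  have he := esymb_lower hξ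
  have h1 : (K / 2)^2 ≤ (K * IA (qs j) 1 ξ)^2 := by
    rw [hIA]
    have : K / 2 ≤ K * esymb 1 ξ 1 := by nlinarith
    nlinarith
  nlinarith [sq_nonneg (K * (IC (qs j) 1 ξ - IC' (qs j) 1 ξ))]

lemma integrable_re_sq (S : Finset Frq) (b : Frq → ℂ) :
    Integrable (fun x => ((∑ ξ ∈ S, b ξ * fchar ξ x).re)^2) μT := by
  have hc : Continuous (fun x : Pt => ∑ ξ ∈ S, b ξ * fchar ξ x) :=
    continuous_finset_sum _ fun ξ _ => continuous_const.mul (fchar_continuous ξ)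
  refine ⟨((Complex.continuous_re.comp hc).pow 2).aestronglyMeasurable, ?_⟩
  apply MeasureTheory.HasFiniteIntegral.of_bounded (C := (∑ ξ ∈ S, ‖b ξ‖)^2)
  filter_upwards with x
  have hb : ‖∑ ξ ∈ S, b ξ * fchar ξ x‖ ≤ ∑ ξ ∈ S, ‖b ξ‖ := by
    refine (norm_sum_le _ _).trans (le_of_eq ?_)
    refine Finset.sum_congr rfl fun ξ _ => ?_
    rw [norm_mul, fchar_abs, mul_one]
  have hre : |(∑ ξ ∈ S, b ξ * fchar ξ x).re| ≤ ‖∑ ξ ∈ S, b ξ * fchar ξ x‖ :=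
    Complex.abs_re_le_norm _
  rw [Real.norm_eq_abs, abs_of_nonneg (sq_nonneg _), ← sq_abs]
  exact pow_le_pow_left₀ (abs_nonneg _) (hre.trans hb) 2

end App

/-- `|U_{q_j}|_{L²} ∼ λ_{q_j}^{2α-5/2}` uniformly in `j`. -/
theorem statement5 (α : ℝ) (hα : 1 ≤ α ∧ α < 5 / 4)
    (qs : ℕ → ℕ) (hqs : GoodSeq α qs) :
    ∃ c C : ℝ, 0 < c ∧ c ≤ C ∧ ∀ j : ℕ,
      c * lam (qs j) ^ (2 * α - 5 / 2) ≤ lpn 2 (UpH α qs j) ∧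
      lpn 2 (UpH α qs j) ≤ C * lam (qs j) ^ (2 * α - 5 / 2) := by
  obtain ⟨hmono, hqs1, hlac⟩ := hqs
  have hπ := Real.pi_pos
  refine ⟨Real.sqrt ((2*Real.pi)^3/12000), Real.sqrt ((2*Real.pi)^3*37500),
    Real.sqrt_pos.2 (by positivity),
    Real.sqrt_le_sqrt (by nlinarith [pow_pos (by linarith : (0:ℝ) < 2*Real.pi) 3]), ?_⟩
  intro j
  have hm : 1 ≤ qs j := hqs1 j
  have hl := lam_pos (qs j)
  have h2l := lam_ge_two (qs j) hm
  set K := lam (qs j) ^ (2*α-4) with hKdef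
  have hK0 : 0 < K := Real.rpow_pos_of_pos hl _
  set D := lam (qs j) ^ (2 * α - 5/2) with hDdef
  have hD0 : 0 < D := Real.rpow_pos_of_pos hl _
  -- UpH is a finite trigonometric sum
  have hUp : UpH α qs j
      = fun x i => (∑ ξ ∈ boxF (qs j), UhatH α qs j ξ i * fchar ξ x).re := by
    funext x i
    rw [UpH]
    congr 1
    exact tsum_eq_sum (fun ξ hξ => by rw [UhatH_supp α qs hqs1 j ξ hξ i, zero_mul])
  set Sgv := ∑ ξ ∈ boxF (qs j), ∑ i, Complex.normSq (UhatH α qs j ξ i) with hSig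
  have hSg0 : 0 ≤ Sgv :=
    Finset.sum_nonneg fun ξ _ => Finset.sum_nonneg fun i _ => Complex.normSq_nonneg _
  -- Plancherel
  have hint_i : ∀ i : Fin 3,
      Integrable (fun x => ((∑ ξ ∈ boxF (qs j), UhatH α qs j ξ i * fchar ξ x).re)^2) μT :=
    fun i => integrable_re_sq _ _
  have hPeq : ∫ x, (∑ i, (((∑ ξ ∈ boxF (qs j), UhatH α qs j ξ i * fchar ξ x).re))^2) ∂μT
      = (2*Real.pi)^3 * Sgv := by
    rw [integral_finset_sum _ (fun i _ => hint_i i)]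
    have hpl : ∀ i ∈ (Finset.univ : Finset (Fin 3)),
        ∫ x, (((∑ ξ ∈ boxF (qs j), UhatH α qs j ξ i * fchar ξ x).re))^2 ∂μT
          = (2*Real.pi)^3 * ∑ ξ ∈ boxF (qs j), Complex.normSq (UhatH α qs j ξ i) :=
      fun i _ => integral_re_sq (boxF (qs j)) (fun ξ => UhatH α qs j ξ i)
        (fun ξ hξ => UhatH_supp α qs hqs1 j ξ hξ i) (fun ξ => UhatH_herm α qs j ξ i)
    rw [Finset.sum_congr rfl hpl, ← Finset.mul_sum, hSig, Finset.sum_comm]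
  have hbounds := lpn_bounds (fun x i => (∑ ξ ∈ boxF (qs j), UhatH α qs j ξ i * fchar ξ x).re)
    ((2*Real.pi)^3 * Sgv) (by positivity)
    ((continuous_pi fun i => Complex.continuous_re.comp
      (continuous_finset_sum _ fun ξ _ => continuous_const.mul (fchar_continuous ξ))).aestronglyMeasurable)
    (integrable_finset_sum _ (fun i _ => hint_i i)) hPeq
  rw [hUp]
  -- Σ bounds
  have hSgub : Sgv ≤ 37500 * lam (qs j)^3 * K^2 := by
    have h1 : Sgv ≤ ∑ _ξ ∈ boxF (qs j), (300*K^2) := by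
      refine Finset.sum_le_sum fun ξ _ => ?_
      calc ∑ i, Complex.normSq (UhatH α qs j ξ i)
          ≤ ∑ _i : Fin 3, 100*K^2 :=
            Finset.sum_le_sum fun i _ => normSq_UhatH_le α qs j ξ i
        _ = 300*K^2 := by
            rw [Finset.sum_const, Finset.card_univ, Fintype.card_fin, nsmul_eq_mul]; ring
    rw [Finset.sum_const, nsmul_eq_mul] at h1
    have hcard := boxF_card_le (qs j) hm
    calc Sgv ≤ ((boxF (qs j)).card : ℝ) * (300*K^2) := h1
      _ ≤ (5 * lam (qs j))^3 * (300*K^2) := by nlinarith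
      _ = 37500 * lam (qs j)^3 * K^2 := by ring
  have hSglb : lam (qs j)^3 * K^2 / 4000 ≤ Sgv := by
    have hsub : ∑ ξ ∈ Afin (qs j), ∑ i, Complex.normSq (UhatH α qs j ξ i) ≤ Sgv :=
      Finset.sum_le_sum_of_subset_of_nonneg (Afin_subset_boxF (qs j))
        (fun ξ _ _ => Finset.sum_nonneg fun i _ => Complex.normSq_nonneg _)
    have hper : ∀ ξ ∈ Afin (qs j), (K/2)^2 ≤ ∑ i, Complex.normSq (UhatH α qs j ξ i) := by
      intro ξ hξ
      refine (normSq_UhatH_lower α qs j (mem_blockA_of_Afin hξ)).trans ?_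
      exact Finset.single_le_sum (f := fun i => Complex.normSq (UhatH α qs j ξ i))
        (fun i _ => Complex.normSq_nonneg _) (Finset.mem_univ 1)
    have hcard := Afin_card_ge (qs j) hm
    calc lam (qs j)^3 * K^2 / 4000 = (lam (qs j)/10)^3 * (K/2)^2 := by ring
      _ ≤ ((Afin (qs j)).card : ℝ) * (K/2)^2 := by nlinarith [sq_nonneg (K/2)]
      _ = ∑ _ξ ∈ Afin (qs j), (K/2)^2 := by rw [Finset.sum_const, nsmul_eq_mul]
      _ ≤ ∑ ξ ∈ Afin (qs j), ∑ i, Complex.normSq (UhatH α qs j ξ i) :=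
          Finset.sum_le_sum hper
      _ ≤ Sgv := hsub
  -- rpow identity: λ³ K² = D²
  have hDD : lam (qs j)^3 * K^2 = D^2 := by
    rw [hKdef, hDdef]
    rw [← Real.rpow_natCast (lam (qs j)) 3,
      ← Real.rpow_natCast (lam (qs j) ^ (2*α-4)) 2,
      ← Real.rpow_natCast (lam (qs j) ^ (2*α-5/2)) 2,
      ← Real.rpow_mul (le_of_lt hl), ← Real.rpow_mul (le_of_lt hl),
      ← Real.rpow_add hl]
    norm_num
    ring_nf
  have hp3 : (0:ℝ) < (2*Real.pi)^3 := pow_pos (by linarith) 3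
  constructor
  · refine le_trans ?_ hbounds.1
    have h1 : Real.sqrt ((2*Real.pi)^3/12000) * D
        = Real.sqrt (((2*Real.pi)^3/12000) * D^2) := by
      rw [Real.sqrt_mul (by positivity : (0:ℝ) ≤ (2*Real.pi)^3/12000) (D^2),
        Real.sqrt_sq (le_of_lt hD0)]
    rw [h1]
    apply Real.sqrt_le_sqrt
    rw [← hDD]
    nlinarith [mul_le_mul_of_nonneg_left hSglb (le_of_lt hp3)]
  · refine le_trans hbounds.2 ?_
    have h1 : Real.sqrt ((2*Real.pi)^3*37500) * D
        = Real.sqrt (((2*Real.pi)^3*37500) * D^2) := by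
      rw [Real.sqrt_mul (by positivity : (0:ℝ) ≤ (2*Real.pi)^3*37500) (D^2),
        Real.sqrt_sq (le_of_lt hD0)]
    rw [h1]
    apply Real.sqrt_le_sqrt
    rw [← hDD]
    nlinarith [mul_le_mul_of_nonneg_left hSgub (le_of_lt hp3)]

end
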